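/- Let F : S ⇄ T : U be a Quillen adjunction between cofibrantly generated model categories, C a small category and D a subset of the objects of C. Then the pair of functors F^C : S^C ⇄ T^C : U^C, defined by postcomposition F^C(X) := F ∘ X and U^C(Y) := U ∘ Y, is a Quillen adjunction between the model categories U_S(C,D) and U_T(C,D). In particular, F^C preserves cofibrant objects and weak equivalences between cofibrant objects. -/

import Mathlib

/-! Preliminaries: basic notions of homotopical algebra (lifting properties,
model structures, transfinite compositions, relative cell complexes, smallness,
cofibrant generation) and the relative model structure `U_S(C,D)` on functor
categories, following Balmer–Matthey, "Codescent theory I". -/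

universe w v u u₂ u₃

open CategoryTheory Limits

namespace Codescent

set_option linter.dupNamespace false

section Lifting

variable {M : Type u} [Category.{v} M]

/-- The class of morphisms having the left lifting property with respect to all
morphisms in `K`. -/
def llp (K : MorphismProperty M) : MorphismProperty M :=
  fun _ _ f => ∀ ⦃X Y : M⦄ (g : X ⟶ Y), K g → HasLiftingProperty f g

/-- The class of morphisms having the right lifting property with respect to all
morphisms in `K`. -/
def rlp (K : MorphismProperty M) : MorphismProperty M :=
  fun _ _ g => ∀ ⦃A B : M⦄ (f : A ⟶ B), K f → HasLiftingProperty f g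

/-- Intersection of two classes of morphisms. -/
def inter (P Q : MorphismProperty M) : MorphismProperty M :=
  fun _ _ f => P f ∧ Q f

/-- `f` is a retract of `g` (as objects of the arrow category). -/
def RetractHom {X Y X' Y' : M} (f : X ⟶ Y) (g : X' ⟶ Y') : Prop :=
  ∃ (i : Arrow.mk f ⟶ Arrow.mk g) (r : Arrow.mk g ⟶ Arrow.mk f), i ≫ r = 𝟙 (Arrow.mk f)

/-- The object `c` is a retract of the object `d`. -/
def IsRetractObj (c d : M) : Prop :=
  ∃ (i : c ⟶ d) (r : d ⟶ c), i ≫ r = 𝟙 c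

/-- A functorial factorization of every morphism as a morphism in `L` followed by
a morphism in `R`. -/
structure FunctorialFact (L R : MorphismProperty M) where
  Z : Arrow M ⥤ M
  ι : (Arrow.leftFunc : Arrow M ⥤ M) ⟶ Z
  π : Z ⟶ (Arrow.rightFunc : Arrow M ⥤ M)
  fac : ∀ f : Arrow M, ι.app f ≫ π.app f = f.hom
  mem_left : ∀ f : Arrow M, L (ι.app f)
  mem_right : ∀ f : Arrow M, R (π.app f)

end Lifting

/-- A (Quillen) model structure on a category `M`: classes of weak equivalences,
cofibrations and fibrations satisfying MC2–MC5 (MC1, completeness and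
cocompleteness, is imposed separately as `HasLimits`/`HasColimits`). -/
structure ModelStructure (M : Type u) [Category.{v} M] where
  weq : MorphismProperty M
  cof : MorphismProperty M
  fib : MorphismProperty M
  /-- MC2, two-out-of-three -/
  weq_comp : ∀ {X Y Z : M} (f : X ⟶ Y) (g : Y ⟶ Z), weq f → weq g → weq (f ≫ g)
  weq_cancel_left : ∀ {X Y Z : M} (f : X ⟶ Y) (g : Y ⟶ Z), weq f → weq (f ≫ g) → weq g
  weq_cancel_right : ∀ {X Y Z : M} (f : X ⟶ Y) (g : Y ⟶ Z), weq g → weq (f ≫ g) → weq f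
  /-- MC3, closure under retracts -/
  weq_retract : ∀ {X Y X' Y' : M} (f : X ⟶ Y) (g : X' ⟶ Y'), RetractHom f g → weq g → weq f
  cof_retract : ∀ {X Y X' Y' : M} (f : X ⟶ Y) (g : X' ⟶ Y'), RetractHom f g → cof g → cof f
  fib_retract : ∀ {X Y X' Y' : M} (f : X ⟶ Y) (g : X' ⟶ Y'), RetractHom f g → fib g → fib f
  /-- MC4, lifting -/
  cof_lift : ∀ {A B X Y : M} (f : A ⟶ B) (g : X ⟶ Y),
    cof f → weq g → fib g → HasLiftingProperty f g
  fib_lift : ∀ {A B X Y : M} (f : A ⟶ B) (g : X ⟶ Y),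
    weq f → cof f → fib g → HasLiftingProperty f g
  /-- MC5, functorial factorizations -/
  fact₁ : FunctorialFact (M := M) cof (inter weq fib)
  fact₂ : FunctorialFact (M := M) (inter weq cof) fib

section Transfinite

/-- A well-ordered type (with bottom element and successors), the index for
transfinite compositions (a "λ-sequence" index). -/
structure WOType : Type (w + 1) where
  carrier : Type w
  [lin : LinearOrder carrier]
  [succ : SuccOrder carrier]
  [bot : OrderBot carrier]
  [wf : WellFoundedLT carrier]

attribute [instance] WOType.lin WOType.succ WOType.bot WOType.wf

variable {M : Type u} [Category.{v} M] {N : Type u₂} [Category.{v} N]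

/-- The class of pushouts of morphisms of `K`. -/
def pushoutsOf (K : MorphismProperty M) : MorphismProperty M :=
  fun X Y f => ∃ (A B : M) (g : A ⟶ B) (t : A ⟶ X) (b : B ⟶ Y), K g ∧ IsPushout g t b f

/-- The inclusion functor of `{i // i < j}` into a preorder `J`. -/
def iioIncl {J : Type w} [Preorder J] (j : J) : {i : J // i < j} ⥤ J where
  obj i := i.1
  map {i i'} h := homOfLE (Subtype.coe_le_coe.mpr (leOfHom h))

/-- The cocone on the restriction of `F : J ⥤ M` to `{i // i < j}` with apex `F.obj j`. -/
def iioCocone {J : Type w} [Preorder J] (F : J ⥤ M) (j : J) : Cocone (iioIncl j ⋙ F) where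
  pt := F.obj j
  ι :=
    { app := fun i => F.map (homOfLE i.2.le)
      naturality := fun i i' h => by
        dsimp
        rw [Category.comp_id, ← F.map_comp]
        rfl }

/-- `F : J ⥤ M` is a (continuous) transfinite sequence all of whose successor
maps lie in the class `P`. -/
structure IsChainOf (P : MorphismProperty M) {J : Type w} [LinearOrder J] [SuccOrder J]
    (F : J ⥤ M) : Prop where
  succ_mem : ∀ j : J, ¬ IsMax j → P (F.map (homOfLE (Order.le_succ j)))
  limit_isColimit : ∀ j : J, Order.IsSuccLimit j → Nonempty (IsColimit (iioCocone F j))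

/-- The class of relative `K`-cells: transfinite compositions of pushouts of
morphisms of `K`. -/
def cell (K : MorphismProperty M) : MorphismProperty M :=
  fun X Y f => ∃ (J : WOType.{v}) (F : J.carrier ⥤ M)
    (_ : IsChainOf (pushoutsOf K) F) (c : Cocone F) (_ : IsColimit c)
    (e : X ≅ F.obj ⊥) (e' : c.pt ≅ Y), f = e.hom ≫ c.ι.app ⊥ ≫ e'.hom

/-- A linear order is `κ`-filtered when it has no top element and every subset of
cardinality at most `κ` is bounded above. -/
def KFiltered (κ : Cardinal.{w}) (J : Type w) [LinearOrder J] : Prop :=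
  (∀ j : J, ∃ j' : J, j < j') ∧
    ∀ s : Set J, Cardinal.mk s ≤ κ → ∃ j : J, ∀ i ∈ s, i ≤ j

/-- The object `d` is small relative to the class `K`: for some cardinal `κ`,
morphisms from `d` into the colimit of any `κ`-filtered well-ordered continuous
sequence with successor maps in `K` factor, essentially uniquely, through some
stage of the sequence. -/
def IsSmallRel (d : M) (K : MorphismProperty M) : Prop :=
  ∃ κ : Cardinal.{v}, ∀ (J : WOType.{v}), KFiltered κ J.carrier →
    ∀ (F : J.carrier ⥤ M), IsChainOf K F →
    ∀ (c : Cocone F), IsColimit c →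
      (∀ g : d ⟶ c.pt, ∃ (j : J.carrier) (h : d ⟶ F.obj j), h ≫ c.ι.app j = g) ∧
      (∀ (j j' : J.carrier) (h : d ⟶ F.obj j) (h' : d ⟶ F.obj j'),
        h ≫ c.ι.app j = h' ≫ c.ι.app j' →
          ∃ (k : J.carrier) (l : j ≤ k) (l' : j' ≤ k),
            h ≫ F.map (homOfLE l) = h' ≫ F.map (homOfLE l'))

/-- The model structure `P` is cofibrantly generated, with set of generating
cofibrations `I` and set of generating trivial cofibrations `J`. -/
structure IsCofGen (P : ModelStructure M) (I J : MorphismProperty M) : Prop where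
  small_I : ∀ ⦃X Y : M⦄ (f : X ⟶ Y), I f → IsSmallRel X (cell I)
  small_J : ∀ ⦃X Y : M⦄ (f : X ⟶ Y), J f → IsSmallRel X (cell J)
  fib_eq : P.fib = rlp J
  trivFib_eq : inter P.weq P.fib = rlp I

/-- A functor preserves pushouts. -/
def PreservesPushouts (G : M ⥤ N) : Prop :=
  ∀ ⦃Z X Y P : M⦄ (f : Z ⟶ X) (g : Z ⟶ Y) (inl : X ⟶ P) (inr : Y ⟶ P),
    IsPushout f g inl inr → IsPushout (G.map f) (G.map g) (G.map inl) (G.map inr)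

/-- A functor preserves transfinite compositions: it preserves colimits of
diagrams indexed by well-ordered types. -/
def PreservesTransfiniteCompositions (G : M ⥤ N) : Prop :=
  ∀ (J : Type v) [LinearOrder J] [WellFoundedLT J] (F : J ⥤ M) (c : Cocone F),
    IsColimit c → Nonempty (IsColimit (G.mapCocone c))

/-- The image `{G(f) | f ∈ K}` of a class of morphisms under a functor. -/
def strictImage (G : M ⥤ N) (K : MorphismProperty M) : MorphismProperty N :=
  fun _ _ g => ∃ (A B : M) (f : A ⟶ B), K f ∧ Arrow.mk (G.map f) = Arrow.mk g

end Transfinite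

section CofRep

variable {M : Type u} [Category.{v} M]

/-- The cofibrant replacement of `X` given by the functorial factorization of
`∅ ⟶ X`. -/
noncomputable def cofRep (P : ModelStructure M) [HasInitial M] (X : M) : M :=
  P.fact₁.Z.obj (Arrow.mk (initial.to X))

/-- The canonical trivial fibration `QX ⟶ X` from the cofibrant replacement. -/
noncomputable def cofRepHom (P : ModelStructure M) [HasInitial M] (X : M) :
    cofRep P X ⟶ X :=
  P.fact₁.π.app (Arrow.mk (initial.to X))

/-- The functor `X ↦ (∅ ⟶ X)` to the arrow category. -/
noncomputable def toArrowInit (M : Type u) [Category.{v} M] [HasInitial M] : M ⥤ Arrow M where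
  obj X := Arrow.mk (initial.to X)
  map {X Y} f := Arrow.homMk (u := 𝟙 _) (v := f) (by apply initial.hom_ext)

/-- The cofibrant replacement functor of the model structure `P`. -/
noncomputable def qFunctor (P : ModelStructure M) [HasInitial M] : M ⥤ M :=
  toArrowInit M ⋙ P.fact₁.Z

end CofRep

section FunctorCat

variable {S : Type u} [Category.{v} S]

/-- The class of morphisms in `S^C` that belong objectwise on `D` to the class `P`;
for `P` the weak equivalences (resp. fibrations) of a model structure these are
the `D`-weak equivalences (resp. the `D`-fibrations). -/
def objProp {C : Type v} [SmallCategory C] (P : MorphismProperty S) (D : Set C) :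
    MorphismProperty (C ⥤ S) :=
  fun _ _ η => ∀ d ∈ D, P (η.app d)

/-- Trivial `D`-fibrations in `S^C`. -/
def dTrivFib {C : Type v} [SmallCategory C] (P : ModelStructure S) (D : Set C) :
    MorphismProperty (C ⥤ S) :=
  inter (objProp P.weq D) (objProp P.fib D)

/-- `D`-cofibrations in `S^C`: the morphisms having the left lifting property with
respect to all trivial `D`-fibrations. -/
def dCof {C : Type v} [SmallCategory C] (P : ModelStructure S) (D : Set C) :
    MorphismProperty (C ⥤ S) :=
  llp (dTrivFib P D)

variable [HasColimits S]

/-- `D`-cofibrant objects of `S^C`. -/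
def dCofibrant {C : Type v} [SmallCategory C] (P : ModelStructure S) (D : Set C)
    (X : C ⥤ S) : Prop :=
  dCof P D (initial.to X)

/-- The model structure `U_S(C,D)` on `S^C`: a model structure whose weak
equivalences are the `D`-weak equivalences, whose fibrations are the
`D`-fibrations and whose cofibrations are the `D`-cofibrations. -/
structure RelStructure (P : ModelStructure S) (C : Type v) [SmallCategory C] (D : Set C) where
  N : ModelStructure (C ⥤ S)
  weq_eq : N.weq = objProp P.weq D
  fib_eq : N.fib = objProp P.fib D
  cof_eq : N.cof = dCof P D

/-- `X` satisfies `D`-codescent at `c`: the cofibrant replacement morphism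
`Q_{C,D} X ⟶ X` in `U_S(C,D)` is a weak equivalence at `c`. -/
def CodescentAt {C : Type v} [SmallCategory C] (P : ModelStructure S) {D : Set C}
    (U : RelStructure P C D) (X : C ⥤ S) (c : C) : Prop :=
  P.weq ((cofRepHom U.N X).app c)

/-- `X` satisfies `D`-codescent: the cofibrant replacement morphism
`Q_{C,D} X ⟶ X` is a `C`-weak equivalence. -/
def Codescent {C : Type v} [SmallCategory C] (P : ModelStructure S) {D : Set C}
    (U : RelStructure P C D) (X : C ⥤ S) : Prop :=
  ∀ c : C, CodescentAt P U X c

/-- The coproduct property for weak equivalences. -/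
def CoproductProperty (P : ModelStructure S) : Prop :=
  ∀ (ι : Type v) (X Y : ι → S) (f : ∀ i, X i ⟶ Y i),
    (∀ i, P.weq (f i)) ↔ P.weq (Limits.Sigma.map f)

end FunctorCat

section Pairs

variable {A : Type v} [SmallCategory A] {C : Type v} [SmallCategory C]

/-- Two subsets of objects are retract equivalent. -/
def RetractEquiv (D D' : Set C) : Prop :=
  (∀ d ∈ D, ∃ d' ∈ D', IsRetractObj d d') ∧ (∀ d' ∈ D', ∃ d ∈ D, IsRetractObj d' d)

/-- `Φ : (A,B) ⟶ (C,D)` is left glossy. -/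
def LeftGlossy (Φ : A ⥤ C) (B : Set A) : Prop :=
  ∀ b ∈ B, ∃ (ι : Type v) (tgt : ι → A) (β : ∀ i, Φ.obj b ⟶ Φ.obj (tgt i)),
    (∀ i, tgt i ∈ B) ∧
      ∀ (a : A) (α : Φ.obj b ⟶ Φ.obj a),
        ∃! p : (i : ι) × (tgt i ⟶ a), β p.1 ≫ Φ.map p.2 = α

/-- `Φ : (A,B) ⟶ (C,D)` is right glossy. -/
def RightGlossy (Φ : A ⥤ C) (B : Set A) : Prop :=
  ∀ b ∈ B, ∃ (ι : Type v) (src : ι → A) (β : ∀ j, Φ.obj (src j) ⟶ Φ.obj b),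
    (∀ j, src j ∈ B) ∧
      ∀ (a : A) (α : Φ.obj a ⟶ Φ.obj b),
        ∃! p : (j : ι) × (a ⟶ src j), Φ.map p.2 ≫ β p.1 = α

/-- A subset of objects is left absorbant: the source of any morphism whose
target lies in the subset also lies in the subset. -/
def LeftAbsorbant (D : Set C) : Prop :=
  ∀ ⦃c c' : C⦄, (c ⟶ c') → c' ∈ D → c ∈ D

end Pairs

end Codescent
open Codescent


namespace Stmt9

open Codescent

section Helpers

variable {S : Type u} [Category.{v} S]

/-- Identities are weak equivalences. -/
lemma weq_id (P : ModelStructure S) (X : S) : P.weq (𝟙 X) := by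
  have hfac := P.fact₂.fac (Arrow.mk (𝟙 X))
  have hmem := P.fact₂.mem_left (Arrow.mk (𝟙 X))
  refine P.weq_retract (𝟙 X) (P.fact₂.ι.app (Arrow.mk (𝟙 X)))
    ⟨Arrow.homMk (u := 𝟙 _) (v := P.fact₂.ι.app (Arrow.mk (𝟙 X))) (by rfl),
     Arrow.homMk (u := 𝟙 _) (v := P.fact₂.π.app (Arrow.mk (𝟙 X))) (by exact (Category.id_comp (𝟙 X)).trans hfac.symm),
     ?_⟩ hmem.1
  ext
  · exact Category.comp_id (𝟙 X)
  · exact hfac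

/-- The retract argument: a morphism with the left lifting property against all
trivial fibrations is a cofibration. -/
lemma cof_of_llp (P : ModelStructure S) {A B : S} (f : A ⟶ B)
    (h : ∀ ⦃X Y : S⦄ (g : X ⟶ Y), inter P.weq P.fib g → HasLiftingProperty f g) :
    P.cof f := by
  set ar := Arrow.mk f with har
  have hfac : P.fact₁.ι.app ar ≫ P.fact₁.π.app ar = f := P.fact₁.fac ar
  have hi : P.cof (P.fact₁.ι.app ar) := P.fact₁.mem_left ar
  have hp := P.fact₁.mem_right ar
  haveI := h (P.fact₁.π.app ar) hp
  have sq : @CommSq S _ A (P.fact₁.Z.obj ar) B (Arrow.rightFunc.obj ar) (P.fact₁.ι.app ar) f (P.fact₁.π.app ar) (𝟙 B) := ⟨hfac.trans (Category.comp_id f).symm⟩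
  haveI : sq.HasLift := this.sq_hasLift sq
  refine P.cof_retract f (P.fact₁.ι.app ar)
    ⟨Arrow.homMk (u := 𝟙 _) (v := sq.lift) (by exact (Category.id_comp (P.fact₁.ι.app ar)).trans sq.fac_left.symm),
     Arrow.homMk (u := 𝟙 _) (v := P.fact₁.π.app ar) (by exact (Category.id_comp f).trans hfac.symm),
     ?_⟩ hi
  ext
  · exact Category.comp_id (𝟙 A)
  · exact sq.fac_right

lemma cof_iff_llp (P : ModelStructure S) {A B : S} (f : A ⟶ B) :
    P.cof f ↔ ∀ ⦃X Y : S⦄ (g : X ⟶ Y), inter P.weq P.fib g → HasLiftingProperty f g :=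
  ⟨fun hf _ _ g hg => P.cof_lift f g hf hg.1 hg.2, cof_of_llp P f⟩

/-- Cofibrations are closed under composition. -/
lemma cof_comp (P : ModelStructure S) {A B C : S} (f : A ⟶ B) (g : B ⟶ C)
    (hf : P.cof f) (hg : P.cof g) : P.cof (f ≫ g) := by
  refine cof_of_llp P _ (fun X Y z hz => ?_)
  haveI := P.cof_lift f z hf hz.1 hz.2
  haveI := P.cof_lift g z hg hz.1 hz.2
  infer_instance

/-- Cofibrations are closed under precomposition by isomorphisms. -/
lemma cof_iso_comp (P : ModelStructure S) {A' A B : S} (e : A' ⟶ A) [IsIso e]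
    (f : A ⟶ B) (hf : P.cof f) : P.cof (e ≫ f) := by
  refine P.cof_retract (e ≫ f) f
    ⟨Arrow.homMk (u := e) (v := 𝟙 _) (by simp),
     Arrow.homMk (u := inv e) (v := 𝟙 _) (by simp),
     ?_⟩ hf
  ext
  · simp
  · simp

/-- A coprojection into a binary coproduct with a cofibrant object is a
cofibration: left lifting against trivial fibrations. -/
lemma cof_coprod_inl (P : ModelStructure S) [HasColimits S] (A B : S)
    (hB : P.cof (initial.to B)) : P.cof (coprod.inl : A ⟶ A ⨿ B) := by
  refine cof_of_llp P _ (fun X Y g hg => ?_)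
  haveI := P.cof_lift (initial.to B) g hB hg.1 hg.2
  constructor
  intro u v sq
  have sq2 : CommSq (initial.to X) (initial.to B) g (coprod.inr ≫ v) :=
    ⟨initial.hom_ext _ _⟩
  refine ⟨⟨⟨coprod.desc u sq2.lift, by simp [coprod.inl_desc], ?_⟩⟩⟩
  apply coprod.hom_ext
  · simpa [coprod.inl_desc, coprod.inr_desc] using sq.w
  · simpa [coprod.inl_desc, coprod.inr_desc] using sq2.fac_right

lemma cof_coprod_inr (P : ModelStructure S) [HasColimits S] (A B : S)
    (hA : P.cof (initial.to A)) : P.cof (coprod.inr : B ⟶ A ⨿ B) := by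
  refine cof_of_llp P _ (fun X Y g hg => ?_)
  haveI := P.cof_lift (initial.to A) g hA hg.1 hg.2
  constructor
  intro u v sq
  have sq2 : CommSq (initial.to X) (initial.to A) g (coprod.inl ≫ v) :=
    ⟨initial.hom_ext _ _⟩
  refine ⟨⟨⟨coprod.desc sq2.lift u, by simp [coprod.inr_desc], ?_⟩⟩⟩
  apply coprod.hom_ext
  · simpa [coprod.inl_desc, coprod.inr_desc] using sq2.fac_right
  · simpa [coprod.inl_desc, coprod.inr_desc] using sq.w

/-- Ken Brown's lemma: a left Quillen functor preserves weak equivalences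
between cofibrant objects. -/
lemma kenBrown {T : Type u₂} [Category.{v} T] [HasColimits S]
    (P : ModelStructure S) (Q : ModelStructure T) (F : S ⥤ T)
    (hFtriv : ∀ ⦃X Y : S⦄ (f : X ⟶ Y), P.weq f → P.cof f →
      Q.weq (F.map f) ∧ Q.cof (F.map f))
    {A B : S} (hA : P.cof (initial.to A)) (hB : P.cof (initial.to B))
    (f : A ⟶ B) (hf : P.weq f) : Q.weq (F.map f) := by
  set ar := Arrow.mk (coprod.desc f (𝟙 B)) with har
  have hfac : P.fact₁.ι.app ar ≫ P.fact₁.π.app ar = coprod.desc f (𝟙 B) := P.fact₁.fac ar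
  have hi : P.cof (P.fact₁.ι.app ar) := P.fact₁.mem_left ar
  have hp := P.fact₁.mem_right ar
  set i := P.fact₁.ι.app ar
  set p := P.fact₁.π.app ar
  set q : A ⟶ _ := coprod.inl ≫ i with hqdef
  set q' : B ⟶ _ := coprod.inr ≫ i with hq'def
  have hq_cof : P.cof q := cof_comp P _ _ (cof_coprod_inl P A B hB) hi
  have hq'_cof : P.cof q' := cof_comp P _ _ (cof_coprod_inr P A B hA) hi
  have hqp : q ≫ p = f := by
    rw [hqdef]
    exact (Category.assoc _ _ _).trans ((congrArg (fun t => coprod.inl ≫ t) hfac).trans (coprod.inl_desc _ _))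
  have hq'p : q' ≫ p = 𝟙 B := by
    rw [hq'def]
    exact (Category.assoc _ _ _).trans ((congrArg (fun t => coprod.inr ≫ t) hfac).trans (coprod.inr_desc _ _))
  have hq_weq : P.weq q := P.weq_cancel_right q p hp.1 (by rw [hqp]; exact hf)
  have hq'_weq : P.weq q' := P.weq_cancel_right q' p hp.1 (by rw [hq'p]; exact weq_id P B)
  have hFq := hFtriv q hq_weq hq_cof
  have hFq' := hFtriv q' hq'_weq hq'_cof
  have hFp : Q.weq (F.map p) := by
    refine Q.weq_cancel_left (F.map q') (F.map p) hFq'.1 ?_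
    rw [← F.map_comp, hq'p]
    exact (congrArg (fun g => Q.weq g) (F.map_id B)).mpr (weq_id Q _)
  have : Q.weq (F.map q ≫ F.map p) := Q.weq_comp _ _ hFq.1 hFp
  rw [← F.map_comp, hqp] at this
  exact this

end Helpers

section Pi

variable {S : Type u} [Category.{v} S] [HasLimits S]
variable {C : Type v} [SmallCategory C]

/-- The right adjoint of evaluation at `d`, applied to `A`:
`c ↦ ∏_{c ⟶ d} A`. -/
@[simps]
noncomputable def piF (d : C) (A : S) : C ⥤ S where
  obj c := ∏ᶜ (fun _ : (c ⟶ d) => A)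
  map {c c'} h := Pi.lift (fun f => Pi.π (fun _ : (c ⟶ d) => A) (h ≫ f))
  map_id c := by
    apply limit.hom_ext
    intro j
    simp
  map_comp {c c' c''} h h' := by
    apply limit.hom_ext
    intro j
    simp

/-- The induced map `piF d A ⟶ piF d B` of a morphism `g : A ⟶ B`. -/
@[simps]
noncomputable def piFmap (d : C) {A B : S} (g : A ⟶ B) : piF d A ⟶ piF d B where
  app c := Limits.Pi.map (fun _ : (c ⟶ d) => g)
  naturality c c' h := by
    apply limit.hom_ext
    intro j
    simp [piF, Limits.Pi.map]

/-- The transpose of `u : X.obj d ⟶ A` along the evaluation adjunction. -/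
@[simps]
noncomputable def hatHom {X : C ⥤ S} {d : C} {A : S} (u : X.obj d ⟶ A) : X ⟶ piF d A where
  app c := Pi.lift (fun f => X.map f ≫ u)
  naturality c c' h := by
    apply limit.hom_ext
    intro j
    simp [piF]

@[simp]
lemma pi_map_π {ι : Type v} {A B : S} (g : A ⟶ B) (i : ι) :
    Limits.Pi.map (fun _ : ι => g) ≫ Pi.π (fun _ : ι => B) i =
      Pi.π (fun _ : ι => A) i ≫ g := by
  simp [Limits.Pi.map]

/-- `rlp` classes are closed under products. -/
lemma rlp_pi (K : MorphismProperty S) {A B : S} (g : A ⟶ B) (hg : rlp K g)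
    (ι : Type v) : rlp K (Limits.Pi.map (fun _ : ι => g)) := by
  intro A' B' f hf
  haveI := hg f hf
  constructor
  intro u v sq
  have sqi : ∀ i : ι, CommSq (u ≫ Pi.π _ i) f g (v ≫ Pi.π _ i) := fun i =>
    ⟨by rw [Category.assoc, ← pi_map_π, ← Category.assoc, sq.w, Category.assoc]⟩
  refine ⟨⟨⟨Limits.Pi.lift (fun i => (sqi i).lift), ?_, ?_⟩⟩⟩
  · apply limit.hom_ext
    intro ⟨j⟩
    simpa using (sqi j).fac_left
  · apply limit.hom_ext
    intro ⟨j⟩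
    simpa using (sqi j).fac_right

end Pi

section Components

variable {S : Type u} [Category.{v} S] [HasLimits S] [HasColimits S]
variable {C : Type v} [SmallCategory C]

/-- `D`-cofibrations are objectwise cofibrations at objects of `D`. -/
lemma component_cof (P : ModelStructure S) (I J : MorphismProperty S)
    (hcgS : IsCofGen P I J) (D : Set C) {X Y : C ⥤ S} (η : X ⟶ Y)
    (hη : dCof P D η) (d : C) (hd : d ∈ D) : P.cof (η.app d) := by
  refine cof_of_llp P _ (fun A B g hg => ?_)
  have hgI : rlp I g := by rw [← hcgS.trivFib_eq]; exact hg
  have hpi : dTrivFib P D (piFmap d g) := by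
    constructor <;> intro e he <;>
    · have : inter P.weq P.fib ((piFmap d g).app e) := by
        rw [hcgS.trivFib_eq]
        exact rlp_pi I g hgI (e ⟶ d)
      first
        | exact this.1
        | exact this.2
  haveI := hη (piFmap d g) hpi
  constructor
  intro u v sq
  have sq2 : CommSq (hatHom u) η (piFmap d g) (hatHom v) := by
    constructor
    ext c
    apply limit.hom_ext
    intro ⟨f⟩
    simp only [NatTrans.comp_app, Category.assoc, hatHom_app, piFmap_app, Limits.Pi.map,
      limMap_π, Discrete.natTrans_app, limit.lift_π, limit.lift_π_assoc, Fan.mk_pt,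
      Fan.mk_π_app, Pi.lift_π]
    show ((Pi.lift fun f => X.map f ≫ u) ≫ limMap (Discrete.natTrans (F := Discrete.functor fun _ : (c ⟶ d) => A)
      (G := Discrete.functor fun _ : (c ⟶ d) => B) fun _ => g)) ≫
      limit.π (Discrete.functor fun x => B) ⟨f⟩ =
      (η.app c ≫ Pi.lift fun f => Y.map f ≫ v) ≫ limit.π (Discrete.functor fun x => B) ⟨f⟩
    simp [sq.w]
  refine ⟨⟨⟨sq2.lift.app d ≫ Pi.π (fun _ : (d ⟶ d) => A) (𝟙 d), ?_, ?_⟩⟩⟩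
  · have h1 := congrArg (fun t : X ⟶ piF d A => t.app d) sq2.fac_left
    simp only [NatTrans.comp_app] at h1
    exact (Category.assoc _ _ _).symm.trans ((congrArg (· ≫ Pi.π (fun _ : (d ⟶ d) => A) (𝟙 d)) h1).trans (by simp))
  · have h2 := congrArg (fun t : Y ⟶ piF d B => t.app d) sq2.fac_right
    simp only [NatTrans.comp_app, piFmap_app] at h2
    exact (Category.assoc _ _ _).trans (((congrArg (sq2.lift.app d ≫ ·) (pi_map_π g (𝟙 d)).symm).trans (Category.assoc _ _ _).symm).trans ((congrArg (· ≫ Pi.π (fun _ : (d ⟶ d) => B) (𝟙 d)) h2).trans (by simp)))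

/-- `D`-cofibrant objects are objectwise cofibrant at objects of `D`. -/
lemma component_cofibrant (P : ModelStructure S) (I J : MorphismProperty S)
    (hcgS : IsCofGen P I J) (D : Set C) (X : C ⥤ S) (hX : dCofibrant P D X)
    (d : C) (hd : d ∈ D) : P.cof (initial.to (X.obj d)) := by
  have h := component_cof P I J hcgS D (initial.to X) hX d hd
  have hInit : IsInitial ((⊥_ (C ⥤ S)).obj d) :=
    initialIsInitial.isInitialObj ((evaluation C S).obj d) _
  haveI : IsIso (initial.to ((⊥_ (C ⥤ S)).obj d)) := by
    refine ⟨hInit.to (⊥_ S), initial.hom_ext _ _, hInit.hom_ext _ _⟩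
  have heq : initial.to (X.obj d) =
      initial.to ((⊥_ (C ⥤ S)).obj d) ≫ (initial.to X).app d := initial.hom_ext _ _
  rw [heq]
  exact cof_iso_comp P _ _ h

end Components

end Stmt9

open Stmt9

/-- a Quillen adjunction `F ⊣ U` induces a Quillen adjunction
`F^C ⊣ U^C` between `U_S(C,D)` and `U_T(C,D)` (Balmer–Matthey, Prop. 6.1). -/
theorem statement_9 {S : Type u} [Category.{v} S] [HasLimits S] [HasColimits S]
    {T : Type u₂} [Category.{v} T] [HasLimits T] [HasColimits T]
    (P : ModelStructure S) (I J : MorphismProperty S) (hcgS : IsCofGen P I J)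
    (Q : ModelStructure T) (I' J' : MorphismProperty T) (hcgT : IsCofGen Q I' J')
    (F : S ⥤ T) (U : T ⥤ S) (adj : F ⊣ U)
    (hFcof : ∀ ⦃X Y : S⦄ (f : X ⟶ Y), P.cof f → Q.cof (F.map f))
    (hFtriv : ∀ ⦃X Y : S⦄ (f : X ⟶ Y), P.weq f → P.cof f →
      Q.weq (F.map f) ∧ Q.cof (F.map f))
    (C : Type v) [SmallCategory C] (D : Set C) :
    Nonempty ((Functor.whiskeringRight C S T).obj F ⊣ (Functor.whiskeringRight C T S).obj U) ∧
    (∀ ⦃X Y : C ⥤ S⦄ (η : X ⟶ Y), dCof P D η →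
      dCof Q D (((Functor.whiskeringRight C S T).obj F).map η)) ∧
    (∀ ⦃X Y : C ⥤ S⦄ (η : X ⟶ Y), objProp P.weq D η → dCof P D η →
      objProp Q.weq D (((Functor.whiskeringRight C S T).obj F).map η) ∧
        dCof Q D (((Functor.whiskeringRight C S T).obj F).map η)) ∧
    (∀ X : C ⥤ S, dCofibrant P D X →
      dCofibrant Q D (((Functor.whiskeringRight C S T).obj F).obj X)) ∧
    (∀ ⦃X Y : C ⥤ S⦄ (η : X ⟶ Y), dCofibrant P D X → dCofibrant P D Y →
      objProp P.weq D η →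
      objProp Q.weq D (((Functor.whiskeringRight C S T).obj F).map η)) := by
  set W := adj.whiskerRight C with hW
  -- `U` preserves trivial fibrations
  have hUtf : ∀ ⦃X Y : T⦄ (g : X ⟶ Y), inter Q.weq Q.fib g →
      inter P.weq P.fib (U.map g) := by
    intro X Y g hg
    rw [hcgS.trivFib_eq]
    intro A B f hf
    have hfcof : P.cof f := by
      refine cof_of_llp P f (fun X' Y' h hh => ?_)
      have : rlp I h := by rw [← hcgS.trivFib_eq]; exact hh
      exact this f hf
    haveI := Q.cof_lift (F.map f) g (hFcof f hfcof) hg.1 hg.2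
    exact (adj.hasLiftingProperty_iff f g).mp inferInstance
  -- claim 2 : `F^C` preserves `D`-cofibrations
  have claim2 : ∀ ⦃X Y : C ⥤ S⦄ (η : X ⟶ Y), dCof P D η →
      dCof Q D (((Functor.whiskeringRight C S T).obj F).map η) := by
    intro X Y η hη G1 G2 g hg
    refine (W.hasLiftingProperty_iff η g).mpr ?_
    refine hη (((Functor.whiskeringRight C T S).obj U).map g) ?_
    exact ⟨fun d hd => (hUtf (g.app d) ⟨hg.1 d hd, hg.2 d hd⟩).1,
           fun d hd => (hUtf (g.app d) ⟨hg.1 d hd, hg.2 d hd⟩).2⟩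
  -- claim 4 : `F^C` preserves `D`-cofibrant objects
  have claim4 : ∀ X : C ⥤ S, dCofibrant P D X →
      dCofibrant Q D (((Functor.whiskeringRight C S T).obj F).obj X) := by
    intro X hX
    have h2 := claim2 (initial.to X) hX
    haveI : PreservesColimitsOfSize.{v, v} ((Functor.whiskeringRight C S T).obj F) :=
      W.leftAdjoint_preservesColimits
    haveI : PreservesColimitsOfSize.{0, 0} ((Functor.whiskeringRight C S T).obj F) :=
      preservesColimitsOfSize_shrink _
    have hInit : IsInitial (((Functor.whiskeringRight C S T).obj F).obj (⊥_ (C ⥤ S))) :=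
      initialIsInitial.isInitialObj ((Functor.whiskeringRight C S T).obj F) _
    haveI : IsIso (initial.to (((Functor.whiskeringRight C S T).obj F).obj (⊥_ (C ⥤ S)))) :=
      ⟨hInit.to (⊥_ (C ⥤ T)), initial.hom_ext _ _, hInit.hom_ext _ _⟩
    have heq : initial.to (((Functor.whiskeringRight C S T).obj F).obj X) =
        initial.to (((Functor.whiskeringRight C S T).obj F).obj (⊥_ (C ⥤ S))) ≫
          ((Functor.whiskeringRight C S T).obj F).map (initial.to X) := initial.hom_ext _ _
    intro G1 G2 g hg
    haveI := h2 g hg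
    rw [show (initial.to (((Functor.whiskeringRight C S T).obj F).obj X)) = _ from heq]
    infer_instance
  refine ⟨⟨W⟩, claim2, ?_, claim4, ?_⟩
  · intro X Y η hw hη
    refine ⟨fun d hd => ?_, claim2 η hη⟩
    exact (hFtriv (η.app d) (hw d hd)
      (component_cof P I J hcgS D η hη d hd)).1
  · intro X Y η hX hY hw d hd
    exact kenBrown P Q F hFtriv
      (component_cofibrant P I J hcgS D X hX d hd)
      (component_cofibrant P I J hcgS D Y hY d hd)
      (η.app d) (hw d hd)
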